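/- Let f : C² → C be a convenient mixed polynomial which is strongly Newton non-degenerate. Then f has a strongly Newton inner non-degenerate boundary. -/
import Mathlib


open Complex

noncomputable section

/-- The index of a mixed monomial: `((ν₁,ν₂),(μ₁,μ₂))`. -/
abbrev MixedIdx : Type := (ℕ × ℕ) × (ℕ × ℕ)

/-- The coefficients `c_{ν,μ}` of a mixed polynomial `f(z,z̄) = Σ c_{ν,μ} z^ν z̄^μ`. -/
abbrev MixedCoeff : Type := MixedIdx → ℂ

/-- The exponent `ν + μ` of a mixed monomial index. -/
def expo (p : MixedIdx) : ℕ × ℕ := (p.1.1 + p.2.1, p.1.2 + p.2.2)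

/-- The linear form `ℓ_P` associated to a weight vector `P`; `ℓ_P ∘ expo` is the
radial degree `rdeg_P`. -/
def ellP (P : ℕ × ℕ) (w : ℕ × ℕ) : ℕ := P.1 * w.1 + P.2 * w.2

/-- The mixed monomial `u^ν₁ v^ν₂ ū^μ₁ v̄^μ₂`. -/
def mono (p : MixedIdx) (u v : ℂ) : ℂ :=
  u ^ p.1.1 * v ^ p.1.2 * (starRingEnd ℂ u) ^ p.2.1 * (starRingEnd ℂ v) ^ p.2.2

/-- Evaluation of the mixed polynomial with coefficients `c` at `(u,v) ∈ ℂ²`. -/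
def eval (c : MixedCoeff) (u v : ℂ) : ℂ := ∑ᶠ p, c p * mono p u v

/-- `c` has finitely many nonzero coefficients (so it really is a polynomial). -/
def FiniteSupp (c : MixedCoeff) : Prop := (Function.support c).Finite

/-- Wirtinger derivative `∂/∂u` at the level of coefficients. -/
def Du (c : MixedCoeff) : MixedCoeff := fun p => (p.1.1 + 1 : ℂ) * c ((p.1.1 + 1, p.1.2), p.2)

/-- Wirtinger derivative `∂/∂ū` at the level of coefficients. -/
def Dub (c : MixedCoeff) : MixedCoeff := fun p => (p.2.1 + 1 : ℂ) * c (p.1, (p.2.1 + 1, p.2.2))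

/-- Wirtinger derivative `∂/∂v` at the level of coefficients. -/
def Dv (c : MixedCoeff) : MixedCoeff := fun p => (p.1.2 + 1 : ℂ) * c ((p.1.1, p.1.2 + 1), p.2)

/-- Wirtinger derivative `∂/∂v̄` at the level of coefficients. -/
def Dvb (c : MixedCoeff) : MixedCoeff := fun p => (p.2.2 + 1 : ℂ) * c (p.1, (p.2.1, p.2.2 + 1))

/-- `(u,v)` is a critical point of the mixed polynomial `c` (the real Jacobian of the
associated map `ℝ⁴ → ℝ²` has rank `≤ 1`), expressed through Oka's equations
`s₁ = s₂ = s₃ = 0`. -/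
def Crit (c : MixedCoeff) (u v : ℂ) : Prop :=
  eval (Du c) u v * starRingEnd ℂ (eval (Dvb c) u v)
      - starRingEnd ℂ (eval (Dub c) u v) * eval (Dv c) u v = 0 ∧
  ‖eval (Du c) u v‖ = ‖eval (Dub c) u v‖ ∧
  ‖eval (Dv c) u v‖ = ‖eval (Dvb c) u v‖

/-- `d(P; c)`: the minimal radial degree of a monomial of `c` w.r.t. the weight `P`. -/
def dmin (P : ℕ × ℕ) (c : MixedCoeff) : ℕ :=
  sInf {n : ℕ | ∃ p, c p ≠ 0 ∧ ellP P (expo p) = n}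

/-- The `P`-relative face function: the monomials of minimal radial degree. -/
def face (P : ℕ × ℕ) (c : MixedCoeff) : MixedCoeff :=
  fun p => if ellP P (expo p) = dmin P c then c p else 0

/-- The face function of the vertex `w`: all monomials with exponent `w`. -/
def vertexFace (w : ℕ × ℕ) (c : MixedCoeff) : MixedCoeff :=
  fun p => if expo p = w then c p else 0

/-- `P` is the (primitive, positive) weight vector of a compact 1-face of the Newton
boundary of `c`: at least two distinct exponents realize the minimal radial degree. -/
def IsFaceWeight (c : MixedCoeff) (P : ℕ × ℕ) : Prop :=
  0 < P.1 ∧ 0 < P.2 ∧ Nat.gcd P.1 P.2 = 1 ∧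
  ∃ p q, c p ≠ 0 ∧ c q ≠ 0 ∧ expo p ≠ expo q ∧
    ellP P (expo p) = dmin P c ∧ ellP P (expo q) = dmin P c

/-- `P` is the weight vector of the steepest compact 1-face (the face `Δ(P₁)`). -/
def IsSteepest (c : MixedCoeff) (P : ℕ × ℕ) : Prop :=
  IsFaceWeight c P ∧ ∀ Q, IsFaceWeight c Q → Q.1 * P.2 ≤ P.1 * Q.2

/-- `P` is the weight vector of the least steep compact 1-face (the face `Δ(P_N)`). -/
def IsLeastSteep (c : MixedCoeff) (P : ℕ × ℕ) : Prop :=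
  IsFaceWeight c P ∧ ∀ Q, IsFaceWeight c Q → P.1 * Q.2 ≤ Q.1 * P.2

/-- `w` is a non-extreme vertex of the Newton boundary: a vertex (an exponent of `c`
lying on the boundary) bounding two different compact 1-faces. -/
def NonExtremeVertex (c : MixedCoeff) (w : ℕ × ℕ) : Prop :=
  (∃ p, c p ≠ 0 ∧ expo p = w) ∧
  ∃ P Q, IsFaceWeight c P ∧ IsFaceWeight c Q ∧ P.1 * Q.2 ≠ Q.1 * P.2 ∧
    ellP P w = dmin P c ∧ ellP Q w = dmin Q c

/-- `c` has an inner Newton non-degenerate boundary. -/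
def InnerNonDeg (c : MixedCoeff) : Prop :=
  (∀ P, IsSteepest c P → ∀ u v : ℂ, v ≠ 0 →
      eval (face P c) u v = 0 → ¬ Crit (face P c) u v) ∧
  (∀ P, IsLeastSteep c P → ∀ u v : ℂ, u ≠ 0 →
      eval (face P c) u v = 0 → ¬ Crit (face P c) u v) ∧
  (∀ P, IsFaceWeight c P → ∀ u v : ℂ, u ≠ 0 → v ≠ 0 →
      eval (face P c) u v = 0 → ¬ Crit (face P c) u v) ∧
  (∀ w, NonExtremeVertex c w → ∀ u v : ℂ, u ≠ 0 → v ≠ 0 →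
      eval (vertexFace w c) u v = 0 → ¬ Crit (vertexFace w c) u v)

/-- `c` has a strongly inner Newton non-degenerate boundary. -/
def StronglyInnerNonDeg (c : MixedCoeff) : Prop :=
  (∀ P, IsSteepest c P → ∀ u v : ℂ, v ≠ 0 → ¬ Crit (face P c) u v) ∧
  (∀ P, IsLeastSteep c P → ∀ u v : ℂ, u ≠ 0 → ¬ Crit (face P c) u v) ∧
  (∀ P, IsFaceWeight c P → ∀ u v : ℂ, u ≠ 0 → v ≠ 0 → ¬ Crit (face P c) u v) ∧
  (∀ w, NonExtremeVertex c w → ∀ u v : ℂ, u ≠ 0 → v ≠ 0 → ¬ Crit (vertexFace w c) u v)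

/-- Oka's Newton non-degeneracy: for every compact face (equivalently, for every
positive weight vector `Q`) the face function has no critical points on its zero set
in `(ℂ*)²`. -/
def NewtonNonDeg (c : MixedCoeff) : Prop :=
  ∀ Q : ℕ × ℕ, 0 < Q.1 → 0 < Q.2 → ∀ u v : ℂ, u ≠ 0 → v ≠ 0 →
    eval (face Q c) u v = 0 → ¬ Crit (face Q c) u v

/-- Oka's strong Newton non-degeneracy: every face function has no critical points
in `(ℂ*)²`. -/
def StronglyNewtonNonDeg (c : MixedCoeff) : Prop :=
  ∀ Q : ℕ × ℕ, 0 < Q.1 → 0 < Q.2 → ∀ u v : ℂ, u ≠ 0 → v ≠ 0 →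
    ¬ Crit (face Q c) u v

/-- The Newton boundary meets the horizontal axis. -/
def UConvenient (c : MixedCoeff) : Prop := ∃ p, c p ≠ 0 ∧ (expo p).2 = 0

/-- The Newton boundary meets the vertical axis. -/
def VConvenient (c : MixedCoeff) : Prop := ∃ p, c p ≠ 0 ∧ (expo p).1 = 0

/-- The monomial index `p` lies on the Newton boundary of `c`. -/
def OnBoundary (c : MixedCoeff) (p : MixedIdx) : Prop :=
  ∃ Q : ℕ × ℕ, 0 < Q.1 ∧ 0 < Q.2 ∧ ellP Q (expo p) = dmin Q c

lemma dmin_le (P : ℕ × ℕ) (c : MixedCoeff) {p : MixedIdx} (h : c p ≠ 0) :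
    dmin P c ≤ ellP P (expo p) :=
  Nat.sInf_le ⟨p, h, rfl⟩

lemma dmin_eq (P : ℕ × ℕ) (c : MixedCoeff) (e : ℕ)
    (h1 : ∃ p, c p ≠ 0 ∧ ellP P (expo p) = e)
    (h2 : ∀ p, c p ≠ 0 → e ≤ ellP P (expo p)) : dmin P c = e := by
  obtain ⟨p, hp, hpe⟩ := h1
  refine le_antisymm (hpe ▸ dmin_le P c hp) ?_
  refine le_csInf ⟨e, p, hp, hpe⟩ ?_
  rintro n ⟨q, hq, rfl⟩
  exact h2 q hq

lemma eval_congr' {h g : MixedCoeff} {u v u' v' : ℂ}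
    (hpt : ∀ p, h p * mono p u v = g p * mono p u' v') :
    eval h u v = eval g u' v' :=
  finsum_congr hpt

lemma eval_zero_of {h : MixedCoeff} (hz : ∀ p, h p = 0) (u v : ℂ) : eval h u v = 0 := by
  have : ∀ p : MixedIdx, h p * mono p u v = 0 := fun p => by rw [hz p, zero_mul]
  calc eval h u v = ∑ᶠ p : MixedIdx, (0:ℂ) := finsum_congr this
  _ = 0 := finsum_zero

lemma mono_u0_of_axis {p : MixedIdx} (h1 : p.1.1 = 0) (h2 : p.2.1 = 0) (v : ℂ) :
    mono p 0 v = mono p 1 v := by simp [mono, h1, h2]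

lemma mono_u0_eq_zero {p : MixedIdx} (h : ¬ (p.1.1 = 0 ∧ p.2.1 = 0)) (v : ℂ) :
    mono p 0 v = 0 := by
  rcases not_and_or.mp h with h | h
  · simp [mono, zero_pow h]
  · simp [mono, zero_pow h]

lemma mono_v0_of_axis {p : MixedIdx} (h1 : p.1.2 = 0) (h2 : p.2.2 = 0) (u : ℂ) :
    mono p u 0 = mono p u 1 := by simp [mono, h1, h2]

lemma mono_v0_eq_zero {p : MixedIdx} (h : ¬ (p.1.2 = 0 ∧ p.2.2 = 0)) (u : ℂ) :
    mono p u 0 = 0 := by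
  rcases not_and_or.mp h with h | h
  · simp [mono, zero_pow h]
  · simp [mono, zero_pow h]

lemma unique_sol (P Q : ℕ × ℕ) (x w : ℕ × ℕ) (hdet : P.1 * Q.2 ≠ Q.1 * P.2)
    (h1 : ellP P x = ellP P w) (h2 : ellP Q x = ellP Q w) : x = w := by
  have e1 : (P.1:ℤ) * x.1 + P.2 * x.2 = P.1 * w.1 + P.2 * w.2 := by
    simp only [ellP] at h1; exact_mod_cast h1
  have e2 : (Q.1:ℤ) * x.1 + Q.2 * x.2 = Q.1 * w.1 + Q.2 * w.2 := by
    simp only [ellP] at h2; exact_mod_cast h2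
  have hdet' : (P.1:ℤ) * Q.2 - Q.1 * P.2 ≠ 0 := by
    intro h
    apply hdet
    have : (P.1:ℤ) * Q.2 = Q.1 * P.2 := by linarith
    exact_mod_cast this
  have k1 : ((P.1:ℤ) * Q.2 - Q.1 * P.2) * ((x.1:ℤ) - w.1) = 0 := by
    linear_combination (Q.2:ℤ) * e1 - (P.2:ℤ) * e2
  have k2 : ((P.1:ℤ) * Q.2 - Q.1 * P.2) * ((x.2:ℤ) - w.2) = 0 := by
    linear_combination (P.1:ℤ) * e2 - (Q.1:ℤ) * e1
  have hx1 : x.1 = w.1 := by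
    have h' := (mul_eq_zero.mp k1).resolve_left hdet'
    have : (x.1:ℤ) = w.1 := by linarith
    exact_mod_cast this
  have hx2 : x.2 = w.2 := by
    have h' := (mul_eq_zero.mp k2).resolve_left hdet'
    have : (x.2:ℤ) = w.2 := by linarith
    exact_mod_cast this
  exact Prod.ext_iff.mpr ⟨hx1, hx2⟩
lemma face_eq_vertexFace_u (c : MixedCoeff) (m : ℕ)
    (hmem : ∃ p, c p ≠ 0 ∧ expo p = (0, m))
    (hmin : ∀ p, c p ≠ 0 → (expo p).1 = 0 → m ≤ (expo p).2) :
    face (m + 1, 1) c = vertexFace (0, m) c := by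
  have hdm : dmin (m + 1, 1) c = m := by
    apply dmin_eq
    · obtain ⟨p, hp, hpe⟩ := hmem
      exact ⟨p, hp, by simp [ellP, hpe]⟩
    · intro p hp
      rcases Nat.eq_zero_or_pos (expo p).1 with h | h
      · have h2 := hmin p hp h
        simp only [ellP, h, Nat.mul_zero, Nat.zero_add, Nat.one_mul]
        exact h2
      · have h2 : m + 1 ≤ (m + 1) * (expo p).1 := Nat.le_mul_of_pos_right _ h
        simp only [ellP, Nat.one_mul]
        linarith
  funext q
  have hcond : (ellP (m + 1, 1) (expo q) = dmin (m + 1, 1) c) ↔ expo q = (0, m) := by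
    rw [hdm]
    constructor
    · intro h
      simp only [ellP, Nat.one_mul] at h
      rcases Nat.eq_zero_or_pos (expo q).1 with h1 | h1
      · rw [h1] at h
        simp only [Nat.mul_zero, Nat.zero_add] at h
        exact Prod.ext_iff.mpr ⟨h1, h⟩
      · exfalso
        have h2 : m + 1 ≤ (m + 1) * (expo q).1 := Nat.le_mul_of_pos_right _ h1
        linarith
    · intro h; simp [ellP, h]
  simp only [face, vertexFace]
  exact if_congr hcond rfl rfl

lemma face_eq_vertexFace_v (c : MixedCoeff) (m : ℕ)
    (hmem : ∃ p, c p ≠ 0 ∧ expo p = (m, 0))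
    (hmin : ∀ p, c p ≠ 0 → (expo p).2 = 0 → m ≤ (expo p).1) :
    face (1, m + 1) c = vertexFace (m, 0) c := by
  have hdm : dmin (1, m + 1) c = m := by
    apply dmin_eq
    · obtain ⟨p, hp, hpe⟩ := hmem
      exact ⟨p, hp, by simp [ellP, hpe]⟩
    · intro p hp
      rcases Nat.eq_zero_or_pos (expo p).2 with h | h
      · have h2 := hmin p hp h
        simp only [ellP, h, Nat.mul_zero, Nat.add_zero, Nat.one_mul]
        exact h2
      · have h2 : m + 1 ≤ (m + 1) * (expo p).2 := Nat.le_mul_of_pos_right _ h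
        simp only [ellP, Nat.one_mul]
        linarith
  funext q
  have hcond : (ellP (1, m + 1) (expo q) = dmin (1, m + 1) c) ↔ expo q = (m, 0) := by
    rw [hdm]
    constructor
    · intro h
      simp only [ellP, Nat.one_mul] at h
      rcases Nat.eq_zero_or_pos (expo q).2 with h1 | h1
      · rw [h1] at h
        simp only [Nat.mul_zero, Nat.add_zero] at h
        exact Prod.ext_iff.mpr ⟨h, h1⟩
      · exfalso
        have h2 : m + 1 ≤ (m + 1) * (expo q).2 := Nat.le_mul_of_pos_right _ h1
        linarith
    · intro h; simp [ellP, h]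
  simp only [face, vertexFace]
  exact if_congr hcond rfl rfl

lemma face_sum_eq_vertexFace (c : MixedCoeff) (P Q : ℕ × ℕ) (w : ℕ × ℕ)
    (hdet : P.1 * Q.2 ≠ Q.1 * P.2)
    (hPw : ellP P w = dmin P c) (hQw : ellP Q w = dmin Q c)
    (hw : ∃ p, c p ≠ 0 ∧ expo p = w) :
    face (P.1 + Q.1, P.2 + Q.2) c = vertexFace w c := by
  have hsum : ∀ x : ℕ × ℕ, ellP (P.1 + Q.1, P.2 + Q.2) x = ellP P x + ellP Q x := by
    intro x; simp only [ellP]; ring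
  have hdmin : dmin (P.1 + Q.1, P.2 + Q.2) c = ellP P w + ellP Q w := by
    apply dmin_eq
    · obtain ⟨p, hp, hpe⟩ := hw
      exact ⟨p, hp, by rw [hsum, hpe]⟩
    · intro p hp
      rw [hsum]
      have h1 := dmin_le P c hp
      have h2 := dmin_le Q c hp
      rw [← hPw] at h1
      rw [← hQw] at h2
      exact Nat.add_le_add h1 h2
  funext q
  simp only [face, vertexFace, hdmin]
  by_cases hcq : c q = 0
  · simp [hcq]
  · have hcond : (ellP (P.1 + Q.1, P.2 + Q.2) (expo q) = ellP P w + ellP Q w) ↔ expo q = w := by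
      constructor
      · intro h
        rw [hsum] at h
        have h1 : ellP P w ≤ ellP P (expo q) := hPw ▸ dmin_le P c hcq
        have h2 : ellP Q w ≤ ellP Q (expo q) := hQw ▸ dmin_le Q c hcq
        have e1 : ellP P (expo q) = ellP P w := le_antisymm (by linarith) h1
        have e2 : ellP Q (expo q) = ellP Q w := le_antisymm (by linarith) h2
        exact unique_sol P Q _ w hdet e1 e2
      · intro h; rw [hsum, h]
    exact if_congr hcond rfl rfl
lemma geom_main (S : Set (ℕ × ℕ)) (hS : S.Finite) (P : ℕ × ℕ)
    (hP1 : 0 < P.1) (hP2 : 0 < P.2) (d : ℕ)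
    (hlb : ∀ w ∈ S, d ≤ ellP P w)
    (hat : ∃ w1 ∈ S, ellP P w1 = d)
    (hsteep : ∀ R : ℕ × ℕ, 0 < R.1 → 0 < R.2 → Nat.gcd R.1 R.2 = 1 →
      (∃ e, (∀ w ∈ S, e ≤ ellP R w) ∧ ∃ a ∈ S, ∃ b ∈ S, a ≠ b ∧ ellP R a = e ∧ ellP R b = e) →
      R.1 * P.2 ≤ P.1 * R.2)
    (m : ℕ) (hmS : (0, m) ∈ S) (hmmin : ∀ k, (0, k) ∈ S → m ≤ k) :
    P.2 * m = d := by
  have hdm : d ≤ P.2 * m := by simpa [ellP] using hlb _ hmS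
  refine le_antisymm ?_ hdm
  obtain ⟨⟨a, b⟩, hw1S, hw1⟩ := hat
  simp only [ellP] at hw1
  rcases Nat.eq_zero_or_pos a with h0 | hpos
  · subst h0
    have hm := hmmin b hw1S
    have : P.2 * m ≤ P.2 * b := Nat.mul_le_mul_left _ hm
    simp only [Nat.mul_zero, Nat.zero_add] at hw1
    omega
  · -- main case: face point off the axis
    have hP1a : 1 ≤ P.1 * a := Nat.one_le_iff_ne_zero.mpr (Nat.mul_ne_zero hP1.ne' hpos.ne')
    have hb : b < m := by
      have h1 : P.2 * b < P.2 * m := by omega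
      exact Nat.lt_of_mul_lt_mul_left h1
    classical
    set T : Finset (ℕ × ℕ) := hS.toFinset.filter (fun w => w.2 < m) with hTdef
    have hmemT : ∀ w : ℕ × ℕ, w ∈ T ↔ w ∈ S ∧ w.2 < m := by
      intro w; simp [hTdef, Set.Finite.mem_toFinset]
    have hw1T : (a, b) ∈ T := (hmemT _).mpr ⟨hw1S, hb⟩
    obtain ⟨ws, hwsT, hwsmin⟩ :=
      T.exists_min_image (fun w => (w.1 : ℚ) / ((m : ℚ) - w.2)) ⟨_, hw1T⟩
    obtain ⟨hwsS, hws2⟩ := (hmemT _).mp hwsT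
    have hcross : ∀ w ∈ T, ws.1 * (m - w.2) ≤ w.1 * (m - ws.2) := by
      intro w hwT
      obtain ⟨hwS, hw2⟩ := (hmemT _).mp hwT
      have h := hwsmin w hwT
      have d1 : (0 : ℚ) < (m : ℚ) - ws.2 := by
        have : (ws.2 : ℚ) < m := by exact_mod_cast hws2
        linarith
      have d2 : (0 : ℚ) < (m : ℚ) - w.2 := by
        have : (w.2 : ℚ) < m := by exact_mod_cast hw2
        linarith
      rw [div_le_div_iff₀ d1 d2] at h
      have h' : (ws.1 : ℚ) * ((m - w.2 : ℕ) : ℚ) ≤ (w.1 : ℚ) * ((m - ws.2 : ℕ) : ℚ) := by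
        rwa [Nat.cast_sub hw2.le, Nat.cast_sub hws2.le]
      exact_mod_cast h'
    have hws1 : 0 < ws.1 := by
      rcases Nat.eq_zero_or_pos ws.1 with h | h
      · exfalso
        have hws' : ws = (0, ws.2) := Prod.ext_iff.mpr ⟨h, rfl⟩
        have := hmmin ws.2 (hws' ▸ hwsS)
        omega
      · exact h
    have hR0lb : ∀ w ∈ S, ws.1 * m ≤ (m - ws.2) * w.1 + ws.1 * w.2 := by
      intro w hwS
      by_cases hw2 : w.2 < m
      · have hc := hcross w ((hmemT _).mpr ⟨hwS, hw2⟩)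
        have hm' : ws.1 * m = ws.1 * (m - w.2) + ws.1 * w.2 := by
          rw [← Nat.mul_add, Nat.sub_add_cancel hw2.le]
        have hc2 : ws.1 * (m - w.2) ≤ (m - ws.2) * w.1 := by
          calc ws.1 * (m - w.2) ≤ w.1 * (m - ws.2) := hc
          _ = (m - ws.2) * w.1 := Nat.mul_comm _ _
        omega
      · push_neg at hw2
        have h1 : ws.1 * m ≤ ws.1 * w.2 := Nat.mul_le_mul_left _ hw2
        omega
    have hR0ws : (m - ws.2) * ws.1 + ws.1 * ws.2 = ws.1 * m := by
      have h1 : m - ws.2 + ws.2 = m := Nat.sub_add_cancel hws2.le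
      calc (m - ws.2) * ws.1 + ws.1 * ws.2 = ws.1 * ((m - ws.2) + ws.2) := by ring
      _ = ws.1 * m := by rw [h1]
    set g0 := Nat.gcd (m - ws.2) ws.1 with hg0
    have hgpos : 0 < g0 := Nat.gcd_pos_of_pos_right _ hws1
    have hd1 : g0 ∣ (m - ws.2) := Nat.gcd_dvd_left _ _
    have hd2 : g0 ∣ ws.1 := Nat.gcd_dvd_right _ _
    set R : ℕ × ℕ := ((m - ws.2) / g0, ws.1 / g0) with hR
    have hmul : ∀ w : ℕ × ℕ, g0 * ellP R w = (m - ws.2) * w.1 + ws.1 * w.2 := by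
      intro w
      simp only [ellP, hR]
      rw [Nat.mul_add, ← Nat.mul_assoc, ← Nat.mul_assoc,
        Nat.mul_div_cancel' hd1, Nat.mul_div_cancel' hd2]
    have hRpos1 : 0 < R.1 := Nat.div_pos (Nat.le_of_dvd (by omega) hd1) hgpos
    have hRpos2 : 0 < R.2 := Nat.div_pos (Nat.le_of_dvd hws1 hd2) hgpos
    have hgcdR : Nat.gcd R.1 R.2 = 1 := Nat.coprime_div_gcd_div_gcd hgpos
    have hface : ∃ e, (∀ w ∈ S, e ≤ ellP R w) ∧
        ∃ x ∈ S, ∃ y ∈ S, x ≠ y ∧ ellP R x = e ∧ ellP R y = e := by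
      have h2 : g0 * ellP R (0, m) = ws.1 * m := by rw [hmul]; simp
      have h3 : g0 * ellP R ws = ws.1 * m := by rw [hmul]; exact hR0ws
      refine ⟨ellP R (0, m), ?_, (0, m), hmS, ws, hwsS, ?_, rfl, ?_⟩
      · intro w hwS
        have h1 := hR0lb w hwS
        have h4 := hmul w
        have h5 : g0 * ellP R (0, m) ≤ g0 * ellP R w := by omega
        exact Nat.le_of_mul_le_mul_left h5 hgpos
      · intro hcon
        have := congrArg Prod.fst hcon
        simp only at this
        omega
      · exact Nat.eq_of_mul_eq_mul_left hgpos (h3.trans h2.symm)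
    have hkey := hsteep R hRpos1 hRpos2 hgcdR hface
    have hkey0 : (m - ws.2) * P.2 ≤ P.1 * ws.1 := by
      have h1 : g0 * (R.1 * P.2) ≤ g0 * (P.1 * R.2) := Nat.mul_le_mul_left _ hkey
      have e1 : g0 * (R.1 * P.2) = (m - ws.2) * P.2 := by
        rw [← Nat.mul_assoc, Nat.mul_div_cancel' hd1]
      have e2 : g0 * (P.1 * R.2) = P.1 * ws.1 := by
        rw [show g0 * (P.1 * R.2) = P.1 * (g0 * R.2) by ring, Nat.mul_div_cancel' hd2]
      omega
    have hcab := hcross (a, b) hw1T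
    have hchain : P.2 * (m - b) * ws.1 ≤ P.1 * a * ws.1 := by
      calc P.2 * (m - b) * ws.1 = P.2 * (ws.1 * (m - b)) := by ring
      _ ≤ P.2 * ((a, b).1 * (m - ws.2)) := Nat.mul_le_mul_left _ hcab
      _ = ((m - ws.2) * P.2) * a := by ring
      _ ≤ (P.1 * ws.1) * a := Nat.mul_le_mul_right _ hkey0
      _ = P.1 * a * ws.1 := by ring
    have h5 : P.2 * (m - b) ≤ P.1 * a := Nat.le_of_mul_le_mul_right hchain hws1
    have h6 : P.2 * m = P.2 * (m - b) + P.2 * b := by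
      rw [← Nat.mul_add, Nat.sub_add_cancel hb.le]
    omega
lemma crit_u0_transfer (c : MixedCoeff) (P : ℕ × ℕ) (hP2 : 0 < P.2) (m : ℕ)
    (hd : dmin P c = P.2 * m) (v : ℂ)
    (hcrit : Crit (face P c) 0 v) : Crit (vertexFace (0, m) c) 1 v := by
  set F := face P c with hF
  set g := vertexFace (0, m) c with hg
  have hax : ∀ q : MixedIdx, q.1.1 + q.2.1 = 0 → F q = g q := by
    intro q hq
    have he1 : (expo q).1 = 0 := hq
    have hEll : ellP P (expo q) = P.2 * (expo q).2 := by simp [ellP, he1]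
    by_cases hcond : (expo q).2 = m
    · have h1 : ellP P (expo q) = dmin P c := by rw [hEll, hcond, hd]
      have h2 : expo q = (0, m) := Prod.ext_iff.mpr ⟨he1, hcond⟩
      show face P c q = vertexFace (0, m) c q
      simp only [face, vertexFace]
      rw [if_pos h1, if_pos h2]
    · have h1 : ellP P (expo q) ≠ dmin P c := by
        rw [hEll, hd]
        intro hcc
        exact hcond (Nat.eq_of_mul_eq_mul_left hP2 hcc)
      have h2 : expo q ≠ (0, m) := fun hcc => hcond (congrArg Prod.snd hcc)
      show face P c q = vertexFace (0, m) c q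
      simp only [face, vertexFace]
      rw [if_neg h1, if_neg h2]
  have hgoff : ∀ q : MixedIdx, q.1.1 + q.2.1 ≠ 0 → g q = 0 := by
    intro q hq
    apply if_neg
    intro hcc
    exact hq (congrArg Prod.fst hcc)
  have hDv : eval (Dv F) 0 v = eval (Dv g) 1 v := by
    apply eval_congr'
    intro p
    by_cases hp : p.1.1 = 0 ∧ p.2.1 = 0
    · have hm := mono_u0_of_axis hp.1 hp.2 v
      have heq : Dv F p = Dv g p := by
        simp only [Dv]
        congr 1
        exact hax _ (by simp [hp.1, hp.2])
      rw [heq, hm]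
    · rw [mono_u0_eq_zero hp, mul_zero]
      have heq : Dv g p = 0 := by
        simp only [Dv]
        have hne : p.1.1 + p.2.1 ≠ 0 := by
          intro hcc
          exact hp ⟨by omega, by omega⟩
        rw [hgoff ((p.1.1, p.1.2 + 1), p.2) hne, mul_zero]
      rw [heq, zero_mul]
  have hDvb : eval (Dvb F) 0 v = eval (Dvb g) 1 v := by
    apply eval_congr'
    intro p
    by_cases hp : p.1.1 = 0 ∧ p.2.1 = 0
    · have hm := mono_u0_of_axis hp.1 hp.2 v
      have heq : Dvb F p = Dvb g p := by
        simp only [Dvb]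
        congr 1
        exact hax _ (by simp [hp.1, hp.2])
      rw [heq, hm]
    · rw [mono_u0_eq_zero hp, mul_zero]
      have heq : Dvb g p = 0 := by
        simp only [Dvb]
        have hne : p.1.1 + p.2.1 ≠ 0 := by
          intro hcc
          exact hp ⟨by omega, by omega⟩
        rw [hgoff (p.1, (p.2.1, p.2.2 + 1)) hne, mul_zero]
      rw [heq, zero_mul]
  have hDu0 : ∀ p, Du g p = 0 := by
    intro p
    simp only [Du]
    rw [hgoff _ (by simp), mul_zero]
  have hDub0 : ∀ p, Dub g p = 0 := by
    intro p
    simp only [Dub]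
    rw [hgoff _ (by simp), mul_zero]
  obtain ⟨hs1, hs2, hs3⟩ := hcrit
  refine ⟨?_, ?_, ?_⟩
  · rw [eval_zero_of hDu0, eval_zero_of hDub0]
    simp
  · rw [eval_zero_of hDu0, eval_zero_of hDub0]
  · rw [← hDv, ← hDvb]
    exact hs3

lemma crit_v0_transfer (c : MixedCoeff) (P : ℕ × ℕ) (hP1 : 0 < P.1) (m : ℕ)
    (hd : dmin P c = P.1 * m) (u : ℂ)
    (hcrit : Crit (face P c) u 0) : Crit (vertexFace (m, 0) c) u 1 := by
  set F := face P c with hF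
  set g := vertexFace (m, 0) c with hg
  have hax : ∀ q : MixedIdx, q.1.2 + q.2.2 = 0 → F q = g q := by
    intro q hq
    have he2 : (expo q).2 = 0 := hq
    have hEll : ellP P (expo q) = P.1 * (expo q).1 := by simp [ellP, he2]
    by_cases hcond : (expo q).1 = m
    · have h1 : ellP P (expo q) = dmin P c := by rw [hEll, hcond, hd]
      have h2 : expo q = (m, 0) := Prod.ext_iff.mpr ⟨hcond, he2⟩
      show face P c q = vertexFace (m, 0) c q
      simp only [face, vertexFace]
      rw [if_pos h1, if_pos h2]
    · have h1 : ellP P (expo q) ≠ dmin P c := by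
        rw [hEll, hd]
        intro hcc
        exact hcond (Nat.eq_of_mul_eq_mul_left hP1 hcc)
      have h2 : expo q ≠ (m, 0) := fun hcc => hcond (congrArg Prod.fst hcc)
      show face P c q = vertexFace (m, 0) c q
      simp only [face, vertexFace]
      rw [if_neg h1, if_neg h2]
  have hgoff : ∀ q : MixedIdx, q.1.2 + q.2.2 ≠ 0 → g q = 0 := by
    intro q hq
    apply if_neg
    intro hcc
    exact hq (congrArg Prod.snd hcc)
  have hDu : eval (Du F) u 0 = eval (Du g) u 1 := by
    apply eval_congr'
    intro p
    by_cases hp : p.1.2 = 0 ∧ p.2.2 = 0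
    · have hm := mono_v0_of_axis hp.1 hp.2 u
      have heq : Du F p = Du g p := by
        simp only [Du]
        congr 1
        exact hax _ (by simp [hp.1, hp.2])
      rw [heq, hm]
    · rw [mono_v0_eq_zero hp, mul_zero]
      have heq : Du g p = 0 := by
        simp only [Du]
        have hne : p.1.2 + p.2.2 ≠ 0 := by
          intro hcc
          exact hp ⟨by omega, by omega⟩
        rw [hgoff ((p.1.1 + 1, p.1.2), p.2) hne, mul_zero]
      rw [heq, zero_mul]
  have hDub : eval (Dub F) u 0 = eval (Dub g) u 1 := by
    apply eval_congr'
    intro p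
    by_cases hp : p.1.2 = 0 ∧ p.2.2 = 0
    · have hm := mono_v0_of_axis hp.1 hp.2 u
      have heq : Dub F p = Dub g p := by
        simp only [Dub]
        congr 1
        exact hax _ (by simp [hp.1, hp.2])
      rw [heq, hm]
    · rw [mono_v0_eq_zero hp, mul_zero]
      have heq : Dub g p = 0 := by
        simp only [Dub]
        have hne : p.1.2 + p.2.2 ≠ 0 := by
          intro hcc
          exact hp ⟨by omega, by omega⟩
        rw [hgoff (p.1, (p.2.1 + 1, p.2.2)) hne, mul_zero]
      rw [heq, zero_mul]
  have hDv0 : ∀ p, Dv g p = 0 := by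
    intro p
    simp only [Dv]
    rw [hgoff _ (by simp), mul_zero]
  have hDvb0 : ∀ p, Dvb g p = 0 := by
    intro p
    simp only [Dvb]
    rw [hgoff _ (by simp), mul_zero]
  obtain ⟨hs1, hs2, hs3⟩ := hcrit
  refine ⟨?_, ?_, ?_⟩
  · rw [eval_zero_of hDv0, eval_zero_of hDvb0]
    simp
  · rw [← hDu, ← hDub]
    exact hs2
  · rw [eval_zero_of hDv0, eval_zero_of hDvb0]
lemma ellP_flip (R x : ℕ × ℕ) : ellP (R.2, R.1) (x.2, x.1) = ellP R x := by
  simp only [ellP]; ring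

lemma steepest_vertex (c : MixedCoeff) (hfin : FiniteSupp c) (P : ℕ × ℕ)
    (hPst : IsSteepest c P) (hvc : VConvenient c) :
    ∃ m : ℕ, (∃ p, c p ≠ 0 ∧ expo p = (0, m)) ∧
      (∀ p, c p ≠ 0 → (expo p).1 = 0 → m ≤ (expo p).2) ∧
      dmin P c = P.2 * m := by
  obtain ⟨hfw, hmax⟩ := hPst
  obtain ⟨hP1, hP2, hgcd, p0, q0, hp0, hq0, hpq, hp0e, hq0e⟩ := hfw
  set S : Set (ℕ × ℕ) := expo '' Function.support c with hSdef
  have hSfin : S.Finite := hfin.image _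
  have hmemS : ∀ w : ℕ × ℕ, w ∈ S ↔ ∃ p, c p ≠ 0 ∧ expo p = w := by
    intro w
    simp [hSdef, Set.mem_image, Function.mem_support]
  set K : Set ℕ := {k | ∃ p, c p ≠ 0 ∧ expo p = (0, k)} with hK
  have hKne : K.Nonempty := by
    obtain ⟨p, hp, hpe⟩ := hvc
    exact ⟨(expo p).2, p, hp, Prod.ext_iff.mpr ⟨hpe, rfl⟩⟩
  set m := sInf K with hm
  have hmK : m ∈ K := Nat.sInf_mem hKne
  have hmmin : ∀ k ∈ K, m ≤ k := fun k hk => Nat.sInf_le hk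
  refine ⟨m, hmK, ?_, ?_⟩
  · intro p hp h1
    exact hmmin _ ⟨p, hp, Prod.ext_iff.mpr ⟨h1, rfl⟩⟩
  · have hgeo := geom_main S hSfin P hP1 hP2 (dmin P c)
      (by
        intro w hw
        obtain ⟨p, hp, rfl⟩ := (hmemS w).mp hw
        exact dmin_le P c hp)
      ⟨expo p0, (hmemS _).mpr ⟨p0, hp0, rfl⟩, hp0e⟩
      (by
        rintro R hR1 hR2 hRg ⟨e, hlbe, a, haS, b, hbS, hab, hea, heb⟩
        obtain ⟨pa, hpa, hpae⟩ := (hmemS a).mp haS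
        obtain ⟨pb, hpb, hpbe⟩ := (hmemS b).mp hbS
        have hdR : dmin R c = e := dmin_eq R c e ⟨pa, hpa, by rw [hpae]; exact hea⟩
          (fun p hp => hlbe _ ((hmemS _).mpr ⟨p, hp, rfl⟩))
        refine hmax R ⟨hR1, hR2, hRg, pa, pb, hpa, hpb, ?_, ?_, ?_⟩
        · rw [hpae, hpbe]; exact hab
        · rw [hpae, hea, hdR]
        · rw [hpbe, heb, hdR])
      m ((hmemS _).mpr hmK) (fun k hk => hmmin k ((hmemS _).mp hk))
    exact hgeo.symm

lemma leaststeep_vertex (c : MixedCoeff) (hfin : FiniteSupp c) (P : ℕ × ℕ)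
    (hPls : IsLeastSteep c P) (huc : UConvenient c) :
    ∃ m : ℕ, (∃ p, c p ≠ 0 ∧ expo p = (m, 0)) ∧
      (∀ p, c p ≠ 0 → (expo p).2 = 0 → m ≤ (expo p).1) ∧
      dmin P c = P.1 * m := by
  obtain ⟨hfw, hls⟩ := hPls
  obtain ⟨hP1, hP2, hgcd, p0, q0, hp0, hq0, hpq, hp0e, hq0e⟩ := hfw
  set S : Set (ℕ × ℕ) := (fun p : MixedIdx => ((expo p).2, (expo p).1)) '' Function.support c
    with hSdef
  have hSfin : S.Finite := hfin.image _
  have hmemS : ∀ w : ℕ × ℕ, w ∈ S ↔ ∃ p, c p ≠ 0 ∧ expo p = (w.2, w.1) := by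
    intro w
    constructor
    · rintro ⟨p, hp, rfl⟩
      exact ⟨p, hp, rfl⟩
    · rintro ⟨p, hp, hpe⟩
      exact ⟨p, hp, by simp [hpe]⟩
  have hflipE : ∀ (R : ℕ × ℕ) (p : MixedIdx),
      ellP R ((expo p).2, (expo p).1) = ellP (R.2, R.1) (expo p) := by
    intro R p; simp only [ellP]; ring
  set K : Set ℕ := {k | ∃ p, c p ≠ 0 ∧ expo p = (k, 0)} with hK
  have hKne : K.Nonempty := by
    obtain ⟨p, hp, hpe⟩ := huc
    exact ⟨(expo p).1, p, hp, Prod.ext_iff.mpr ⟨rfl, hpe⟩⟩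
  set m := sInf K with hm
  have hmK : m ∈ K := Nat.sInf_mem hKne
  have hmmin : ∀ k ∈ K, m ≤ k := fun k hk => Nat.sInf_le hk
  refine ⟨m, hmK, ?_, ?_⟩
  · intro p hp h1
    exact hmmin _ ⟨p, hp, Prod.ext_iff.mpr ⟨rfl, h1⟩⟩
  · have hPQ : ∀ p : MixedIdx, ellP (P.2, P.1).2 * 0 = 0 := fun _ => rfl
    have hgeo := geom_main S hSfin (P.2, P.1) hP2 hP1 (dmin P c)
      (by
        rintro w ⟨p, hp, rfl⟩
        rw [show ellP (P.2, P.1) ((expo p).2, (expo p).1) = ellP P (expo p) from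
          ellP_flip P (expo p)]
        exact dmin_le P c hp)
      ⟨((expo p0).2, (expo p0).1),
        (hmemS ((expo p0).2, (expo p0).1)).mpr ⟨p0, hp0, by simp⟩, by
        rw [show ellP (P.2, P.1) ((expo p0).2, (expo p0).1) = ellP P (expo p0) from
          ellP_flip P (expo p0)]
        exact hp0e⟩
      (by
        rintro R hR1 hR2 hRg ⟨e, hlbe, a, haS, b, hbS, hab, hea, heb⟩
        obtain ⟨pa, hpa, hpae⟩ := (hmemS a).mp haS
        obtain ⟨pb, hpb, hpbe⟩ := (hmemS b).mp hbS
        have heaa : ellP (R.2, R.1) (expo pa) = e := by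
          rw [hpae, show ellP (R.2, R.1) (a.2, a.1) = ellP R a from ellP_flip R a]
          exact hea
        have hebb : ellP (R.2, R.1) (expo pb) = e := by
          rw [hpbe, show ellP (R.2, R.1) (b.2, b.1) = ellP R b from ellP_flip R b]
          exact heb
        have hdR : dmin (R.2, R.1) c = e := by
          refine dmin_eq _ c e ⟨pa, hpa, heaa⟩ ?_
          intro p hp
          have := hlbe ((expo p).2, (expo p).1)
            ((hmemS ((expo p).2, (expo p).1)).mpr ⟨p, hp, by simp⟩)
          rwa [hflipE R p] at this
        have hfwR : IsFaceWeight c (R.2, R.1) := by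
          refine ⟨hR2, hR1, (Nat.gcd_comm _ _).trans hRg, pa, pb, hpa, hpb, ?_, ?_, ?_⟩
          · rw [hpae, hpbe]
            intro hcc
            apply hab
            have h1 := congrArg Prod.fst hcc
            have h2 := congrArg Prod.snd hcc
            exact Prod.ext_iff.mpr ⟨h2, h1⟩
          · rw [heaa, hdR]
          · rw [hebb, hdR]
        have := hls (R.2, R.1) hfwR
        simpa [Nat.mul_comm] using this)
      m ((hmemS _).mpr hmK) (fun k hk => hmmin k ((hmemS _).mp hk))
    simpa using hgeo.symm
/-- a convenient, strongly Newton non-degenerate mixed polynomial has a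
strongly Newton inner non-degenerate boundary. -/
theorem strongly_newton_nondeg_convenient_implies_strongly_inner
    (c : MixedCoeff) (hfin : FiniteSupp c)
    (hN : ∃ P, IsFaceWeight c P)
    (huc : UConvenient c) (hvc : VConvenient c)
    (hsnd : StronglyNewtonNonDeg c) :
    StronglyInnerNonDeg c := by
  refine ⟨?_, ?_, ?_, ?_⟩
  · -- steepest face: no critical points off `v = 0`
    intro P hPst u v hv hcrit
    by_cases hu : u = 0
    · subst hu
      obtain ⟨m, hmem, hmin, hd⟩ := steepest_vertex c hfin P hPst hvc
      have hface := face_eq_vertexFace_u c m hmem hmin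
      have hcrit' : Crit (vertexFace (0, m) c) 1 v :=
        crit_u0_transfer c P hPst.1.2.1 m hd v hcrit
      have hnc := hsnd (m + 1, 1) (Nat.succ_pos m) Nat.one_pos 1 v one_ne_zero hv
      rw [hface] at hnc
      exact hnc hcrit'
    · exact hsnd P hPst.1.1 hPst.1.2.1 u v hu hv hcrit
  · -- least steep face: no critical points off `u = 0`
    intro P hPls u v hu hcrit
    by_cases hv : v = 0
    · subst hv
      obtain ⟨m, hmem, hmin, hd⟩ := leaststeep_vertex c hfin P hPls huc
      have hface := face_eq_vertexFace_v c m hmem hmin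
      have hcrit' : Crit (vertexFace (m, 0) c) u 1 :=
        crit_v0_transfer c P hPls.1.1 m hd u hcrit
      have hnc := hsnd (1, m + 1) Nat.one_pos (Nat.succ_pos m) u 1 hu one_ne_zero
      rw [hface] at hnc
      exact hnc hcrit'
    · exact hsnd P hPls.1.1 hPls.1.2.1 u v hu hv hcrit
  · -- 1-faces
    intro P hP u v hu hv hcrit
    exact hsnd P hP.1 hP.2.1 u v hu hv hcrit
  · -- non-extreme vertices
    intro w hw u v hu hv hcrit
    obtain ⟨hw0, P, Q, hP, hQ, hdet, hPw, hQw⟩ := hw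
    have hface := face_sum_eq_vertexFace c P Q w hdet hPw hQw hw0
    have hnc := hsnd (P.1 + Q.1, P.2 + Q.2)
      (by have := hP.1; have := hQ.1; omega)
      (by have := hP.2.1; have := hQ.2.1; omega) u v hu hv
    rw [hface] at hnc
    exact hnc hcrit
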